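/- arXiv:1503.03980 — 2 statements merged into one kernel-verified Lean document; each statement's English description precedes it below -/
import Mathlib

section
/- Let φ : [0,2] → ℝ be twice continuously differentiable and let k ∈ (0,2) be such that φ''(t) < 0 for t ∈ [0,k) and φ''(t) > 0 for t ∈ (k,2]. Let β ∈ (0,1) satisfy φ(2β) − φ(β) = β·φ'(β), and define Γ : [0,1] → [0,1] by Γ(x) = β − x for x ∈ [0,β) and Γ(x) = x for x ∈ [β,1]. Then the pushforward π* of Lebesgue measure on [0,1] under x ↦ (x, Γ(x)) is a doubly stochastic measure on [0,1]², and for every doubly stochastic measure π on [0,1]², ∫ φ(x+y) dπ(x,y) ≤ ∫ φ(x+y) dπ*(x,y) = ∫₀¹ φ(x + Γ(x)) dx. -/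
open MeasureTheory Set

/-- A doubly stochastic measure on `[0,1]²`. -/
def IsDoublyStochastic (π : Measure (ℝ × ℝ)) : Prop :=
  IsProbabilityMeasure π ∧
  (∀ B : Set ℝ, MeasurableSet B → B ⊆ Icc 0 1 → π (B ×ˢ Icc (0:ℝ) 1) = volume B) ∧
  (∀ B : Set ℝ, MeasurableSet B → B ⊆ Icc 0 1 → π (Icc (0:ℝ) 1 ×ˢ B) = volume B)

lemma aux_compl (π : Measure (ℝ × ℝ)) (h : IsDoublyStochastic π) :
    π ((Icc (0:ℝ) 1 ×ˢ Icc (0:ℝ) 1)ᶜ) = 0 := by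
  obtain ⟨hp, h1, _⟩ := h
  have hS : π (Icc (0:ℝ) 1 ×ˢ Icc (0:ℝ) 1) = 1 := by
    rw [h1 (Icc 0 1) measurableSet_Icc subset_rfl, Real.volume_Icc]
    norm_num
  rw [measure_compl (measurableSet_Icc.prod measurableSet_Icc) (measure_ne_top _ _),
    hS, measure_univ, tsub_self]

lemma aux_mem_ae (π : Measure (ℝ × ℝ)) (h : IsDoublyStochastic π) :
    ∀ᵐ p ∂π, p ∈ Icc (0:ℝ) 1 ×ˢ Icc (0:ℝ) 1 := by
  have := aux_compl π h
  rw [ae_iff]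
  convert this using 2
  rfl

lemma aux_meas_inter (π : Measure (ℝ × ℝ)) (h : IsDoublyStochastic π) (A : Set (ℝ × ℝ)) :
    π A = π (A ∩ Icc (0:ℝ) 1 ×ˢ Icc (0:ℝ) 1) := by
  refine le_antisymm ?_ (measure_mono inter_subset_left)
  calc π A ≤ π ((A ∩ Icc (0:ℝ) 1 ×ˢ Icc (0:ℝ) 1) ∪ (Icc (0:ℝ) 1 ×ˢ Icc (0:ℝ) 1)ᶜ) := by
        apply measure_mono
        intro p hp
        by_cases hmem : p ∈ Icc (0:ℝ) 1 ×ˢ Icc (0:ℝ) 1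
        · exact Or.inl ⟨hp, hmem⟩
        · exact Or.inr hmem
    _ ≤ π (A ∩ Icc (0:ℝ) 1 ×ˢ Icc (0:ℝ) 1) + π ((Icc (0:ℝ) 1 ×ˢ Icc (0:ℝ) 1)ᶜ) :=
        measure_union_le _ _
    _ = π (A ∩ Icc (0:ℝ) 1 ×ˢ Icc (0:ℝ) 1) := by rw [aux_compl π h, add_zero]

lemma aux_fst (π : Measure (ℝ × ℝ)) (h : IsDoublyStochastic π) :
    Measure.map Prod.fst π = volume.restrict (Icc (0:ℝ) 1) := by
  refine Measure.ext fun B hB => ?_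
  rw [Measure.map_apply measurable_fst hB, Measure.restrict_apply hB,
    aux_meas_inter π h]
  have key : Prod.fst ⁻¹' B ∩ Icc (0:ℝ) 1 ×ˢ Icc (0:ℝ) 1
      = (B ∩ Icc 0 1) ×ˢ Icc (0:ℝ) 1 := by
    ext ⟨a, b⟩
    simp only [mem_inter_iff, mem_preimage, mem_prod]
    tauto
  rw [key, h.2.1 _ (hB.inter measurableSet_Icc) inter_subset_right]

lemma aux_snd (π : Measure (ℝ × ℝ)) (h : IsDoublyStochastic π) :
    Measure.map Prod.snd π = volume.restrict (Icc (0:ℝ) 1) := by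
  refine Measure.ext fun B hB => ?_
  rw [Measure.map_apply measurable_snd hB, Measure.restrict_apply hB,
    aux_meas_inter π h]
  have key : Prod.snd ⁻¹' B ∩ Icc (0:ℝ) 1 ×ˢ Icc (0:ℝ) 1
      = Icc (0:ℝ) 1 ×ˢ (B ∩ Icc 0 1) := by
    ext ⟨a, b⟩
    simp only [mem_inter_iff, mem_preimage, mem_prod]
    tauto
  rw [key, h.2.2 _ (hB.inter measurableSet_Icc) inter_subset_right]

lemma aux_vol_split (β : ℝ) (B : Set ℝ)
    (hB : MeasurableSet B) (hBsub : B ⊆ Icc (0:ℝ) 1) :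
    volume (B ∩ Ioc 0 β) + volume (B ∩ Icc β 1) = volume B := by
  have h1 : volume (B ∩ Ioc 0 β) + volume (B ∩ Icc β 1)
      = volume ((B ∩ Ioc 0 β) ∪ (B ∩ Icc β 1)) + volume ((B ∩ Ioc 0 β) ∩ (B ∩ Icc β 1)) :=
    (measure_union_add_inter _ (hB.inter measurableSet_Icc)).symm
  have h2 : volume ((B ∩ Ioc 0 β) ∩ (B ∩ Icc β 1)) = 0 := by
    refine measure_mono_null ?_ (Real.volume_singleton (a := β))
    rintro x ⟨⟨-, hx1⟩, ⟨-, hx2⟩⟩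
    exact le_antisymm hx1.2 hx2.1 ▸ rfl
  have h3 : volume ((B ∩ Ioc 0 β) ∪ (B ∩ Icc β 1)) = volume B := by
    refine le_antisymm (measure_mono (by rintro x (⟨hx, -⟩ | ⟨hx, -⟩) <;> exact hx)) ?_
    calc volume B ≤ volume (((B ∩ Ioc 0 β) ∪ (B ∩ Icc β 1)) ∪ {0}) := by
          apply measure_mono
          intro x hx
          rcases eq_or_lt_of_le (hBsub hx).1 with h0 | h0
          · exact Or.inr (by simp [← h0])
          · rcases le_total x β with hxb | hxb
            · exact Or.inl (Or.inl ⟨hx, h0, hxb⟩)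
            · exact Or.inl (Or.inr ⟨hx, hxb, (hBsub hx).2⟩)
      _ ≤ volume ((B ∩ Ioc 0 β) ∪ (B ∩ Icc β 1)) + volume ({0} : Set ℝ) :=
          measure_union_le _ _
      _ = volume ((B ∩ Ioc 0 β) ∪ (B ∩ Icc β 1)) := by
          rw [Real.volume_singleton, add_zero]
  rw [h1, h2, h3, add_zero]

lemma aux_refl (β : ℝ) (S : Set ℝ) (hS : MeasurableSet S) :
    volume ((fun x => β - x) ⁻¹' S) = volume S :=
  (Measure.measurePreserving_sub_left volume β).measure_preimage hS.nullMeasurableSet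

lemma aux_analysis (φ φ' φ'' : ℝ → ℝ)
    (hd1 : ∀ t ∈ Icc (0:ℝ) 2, HasDerivWithinAt φ (φ' t) (Icc 0 2) t)
    (hd2 : ∀ t ∈ Icc (0:ℝ) 2, HasDerivWithinAt φ' (φ'' t) (Icc 0 2) t)
    (k : ℝ) (hk : k ∈ Ioo (0:ℝ) 2)
    (hconc : ∀ t ∈ Ico (0:ℝ) k, φ'' t < 0)
    (hconv : ∀ t ∈ Ioc k 2, 0 < φ'' t)
    (β : ℝ) (hβ : β ∈ Ioo (0:ℝ) 1)
    (hβeq : φ (2 * β) - φ β = β * φ' β) :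
    ∀ x ∈ Icc (0:ℝ) 1, ∀ y ∈ Icc (0:ℝ) 1,
      φ (x + y) ≤ (if x < β then (φ β + φ' β * (2*x - β))/2 else φ (2*x)/2)
                + (if y < β then (φ β + φ' β * (2*y - β))/2 else φ (2*y)/2) := by
  obtain ⟨hβ0, hβ1⟩ := hβ
  obtain ⟨hk0, hk2⟩ := hk
  have contφ : ContinuousOn φ (Icc 0 2) := fun t ht => (hd1 t ht).continuousWithinAt
  have contφ' : ContinuousOn φ' (Icc 0 2) := fun t ht => (hd2 t ht).continuousWithinAt
  -- strict antitonicity of φ' on [0,k]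
  have sa : StrictAntiOn φ' (Icc 0 k) := by
    apply strictAntiOn_of_hasDerivWithinAt_neg (convex_Icc 0 k)
      (contφ'.mono (Icc_subset_Icc le_rfl hk2.le))
    · intro x hx
      rw [interior_Icc] at hx ⊢
      exact (hd2 x ⟨hx.1.le, by linarith [hx.2]⟩).mono
        (fun y hy => ⟨hy.1.le, by linarith [hy.2]⟩)
    · intro x hx
      rw [interior_Icc] at hx
      exact hconc x ⟨hx.1.le, hx.2⟩
  -- strict monotonicity of φ' on [k,2]
  have sm : StrictMonoOn φ' (Icc k 2) := by
    apply strictMonoOn_of_hasDerivWithinAt_pos (convex_Icc k 2)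
      (contφ'.mono (Icc_subset_Icc hk0.le le_rfl))
    · intro x hx
      rw [interior_Icc] at hx ⊢
      exact (hd2 x ⟨by linarith [hx.1], hx.2.le⟩).mono
        (fun y hy => ⟨by linarith [hy.1], hy.2.le⟩)
    · intro x hx
      rw [interior_Icc] at hx
      exact hconv x ⟨hx.1, hx.2.le⟩
  -- MVT point
  have hββ : β < 2 * β := by linarith
  obtain ⟨c, hc, hceq⟩ := exists_hasDerivAt_eq_slope φ φ' hββ
    (contφ.mono (Icc_subset_Icc (by linarith) (by linarith)))
    (fun x hx => (hd1 x ⟨by linarith [hx.1], by linarith [hx.2]⟩).hasDerivAt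
      (Icc_mem_nhds (by linarith [hx.1]) (by linarith [hx.2])))
  have hcφ : φ' c = φ' β := by
    rw [hceq, hβeq, show 2 * β - β = β by ring, mul_comm, mul_div_assoc,
      div_self hβ0.ne', mul_one]
  have hβk : β < k := by
    by_contra h
    push_neg at h
    exact absurd hcφ
      (ne_of_gt (sm ⟨h, by linarith⟩ ⟨by linarith [hc.1], by linarith [hc.2]⟩ hc.1))
  have hk2β : k < 2 * β := by
    by_contra h
    push_neg at h
    exact absurd hcφ
      (ne_of_lt (sa ⟨hβ0.le, by linarith⟩ ⟨by linarith [hc.1], by linarith [hc.2]⟩ hc.1))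
  -- the auxiliary function g
  obtain ⟨g, hg⟩ : ∃ g : ℝ → ℝ, g = fun t => φ t - φ' β * t := ⟨_, rfl⟩
  have hdg : ∀ t ∈ Icc (0:ℝ) 2, HasDerivWithinAt g (φ' t - φ' β) (Icc 0 2) t := by
    intro t ht
    rw [hg]
    exact ((hd1 t ht).sub ((hasDerivWithinAt_id t (Icc (0:ℝ) 2)).const_mul (φ' β))).congr_deriv (by ring)
  have contg : ContinuousOn g (Icc 0 2) := fun t ht => (hdg t ht).continuousWithinAt
  have A1 : ∀ t ∈ Icc (0:ℝ) β, g t ≤ g β := by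
    have mono : MonotoneOn g (Icc 0 β) := by
      apply monotoneOn_of_hasDerivWithinAt_nonneg (convex_Icc 0 β)
        (contg.mono (Icc_subset_Icc le_rfl (by linarith)))
      · intro x hx
        rw [interior_Icc] at hx ⊢
        exact (hdg x ⟨hx.1.le, by linarith [hx.2]⟩).mono
          (fun y hy => ⟨hy.1.le, by linarith [hy.2]⟩)
      · intro x hx
        rw [interior_Icc] at hx
        have := sa ⟨hx.1.le, by linarith [hx.2]⟩ ⟨hβ0.le, hβk.le⟩ hx.2
        linarith
    exact fun t ht => mono ht ⟨hβ0.le, le_rfl⟩ ht.2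
  have A2 : ∀ t ∈ Icc β k, g t ≤ g β := by
    have anti : AntitoneOn g (Icc β k) := by
      apply antitoneOn_of_hasDerivWithinAt_nonpos (convex_Icc β k)
        (contg.mono (Icc_subset_Icc hβ0.le hk2.le))
      · intro x hx
        rw [interior_Icc] at hx ⊢
        exact (hdg x ⟨by linarith [hx.1], by linarith [hx.2]⟩).mono
          (fun y hy => ⟨by linarith [hy.1], by linarith [hy.2]⟩)
      · intro x hx
        rw [interior_Icc] at hx
        have := sa ⟨hβ0.le, hβk.le⟩ ⟨by linarith [hx.1], hx.2.le⟩ hx.1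
        linarith
    exact fun t ht => anti ⟨le_rfl, hβk.le⟩ ht ht.1
  have gcvx : ConvexOn ℝ (Icc k 2) g := by
    apply convexOn_of_hasDerivWithinAt2_nonneg (convex_Icc k 2)
      (contg.mono (Icc_subset_Icc hk0.le le_rfl))
      (f' := fun t => φ' t - φ' β) (f'' := φ'')
    · intro x hx
      rw [interior_Icc] at hx ⊢
      exact (hdg x ⟨by linarith [hx.1], hx.2.le⟩).mono
        (fun y hy => ⟨by linarith [hy.1], hy.2.le⟩)
    · intro x hx
      rw [interior_Icc] at hx ⊢
      exact ((hd2 x ⟨by linarith [hx.1], hx.2.le⟩).sub_const (φ' β)).mono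
        (fun y hy => ⟨by linarith [hy.1], hy.2.le⟩)
    · intro x hx
      rw [interior_Icc] at hx
      exact (hconv x ⟨hx.1, hx.2.le⟩).le
  have cvxφ : ConvexOn ℝ (Icc k 2) φ := by
    apply convexOn_of_hasDerivWithinAt2_nonneg (convex_Icc k 2)
      (contφ.mono (Icc_subset_Icc hk0.le le_rfl)) (f' := φ') (f'' := φ'')
    · intro x hx
      rw [interior_Icc] at hx ⊢
      exact (hd1 x ⟨by linarith [hx.1], hx.2.le⟩).mono
        (fun y hy => ⟨by linarith [hy.1], hy.2.le⟩)
    · intro x hx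
      rw [interior_Icc] at hx ⊢
      exact (hd2 x ⟨by linarith [hx.1], hx.2.le⟩).mono
        (fun y hy => ⟨by linarith [hy.1], hy.2.le⟩)
    · intro x hx
      rw [interior_Icc] at hx
      exact (hconv x ⟨hx.1, hx.2.le⟩).le
  have hg2β : g (2 * β) = g β := by
    simp only [hg]
    linarith
  have LemA : ∀ t ∈ Icc (0:ℝ) (2 * β), g t ≤ g β := by
    intro t ht
    rcases le_total t β with h | h
    · exact A1 t ⟨ht.1, h⟩
    · rcases le_total t k with h' | h'
      · exact A2 t ⟨h, h'⟩
      · have := gcvx.le_max_of_mem_Icc ⟨le_rfl, hk2.le⟩ ⟨hk2β.le, by linarith⟩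
          ⟨h', ht.2⟩
        have h1 : g k ≤ g β := A2 k ⟨hβk.le, le_rfl⟩
        have h2 : g (2 * β) ≤ g β := hg2β.le
        exact this.trans (max_le h1 h2)
  have LemC : ∀ t ∈ Icc (2 * β) 2, g β ≤ g t := by
    intro t ht
    rcases eq_or_lt_of_le ht.1 with h | h
    · rw [← h, hg2β]
    · have hslope := gcvx.slope_mono_adjacent ⟨le_rfl, hk2.le⟩ ⟨by linarith, ht.2⟩
        hk2β h
      have h1 : 0 ≤ (g (2 * β) - g k) / (2 * β - k) := by
        apply div_nonneg _ (by linarith)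
        have := A2 k ⟨hβk.le, le_rfl⟩
        linarith [hg2β]
      have h2 := h1.trans hslope
      rw [le_div_iff₀ (by linarith)] at h2
      linarith [hg2β]
  have hφg : ∀ t, φ t = g t + φ' β * t := by
    intro t; simp only [hg]; ring
  -- mixed case helper
  have mixed : ∀ x y : ℝ, 0 ≤ x → x < β → β ≤ y → y ≤ 1 →
      φ (x + y) ≤ (φ β + φ' β * (2*x - β))/2 + φ (2*y)/2 := by
    intro x y hx0 hxβ hβy hy1
    have hC2y : g β ≤ g (2 * y) := LemC (2 * y) ⟨by linarith, by linarith⟩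
    have hrw : (φ β + φ' β * (2*x - β))/2 + φ (2*y)/2
        = (g β + g (2*y))/2 + φ' β * (x + y) := by
      simp only [hg]; ring
    rw [hrw, hφg (x + y)]
    have hgoal : g (x + y) ≤ (g β + g (2*y))/2 := by
      rcases le_or_gt (x + y) (2 * β) with h | h
      · have := LemA (x + y) ⟨by linarith, h⟩
        linarith
      · have hd : 0 < y - β := by linarith
        have hne : y - β ≠ 0 := hd.ne'
        set a : ℝ := (y - x)/(2*(y - β)) with ha
        have hne2 : (2*(y - β)) ≠ 0 := by positivity
        have hab : a + (x + y - 2*β)/(2*(y - β)) = 1 := by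
          rw [ha, ← add_div, show y - x + (x + y - 2*β) = 2*(y-β) by ring,
            div_self hne2]
        have ha0 : 0 ≤ a := div_nonneg (by linarith) (by linarith)
        have hb0 : 0 ≤ (x + y - 2*β)/(2*(y - β)) := div_nonneg (by linarith) (by linarith)
        have hcomb := gcvx.2 (x := 2*β) (y := 2*y) ⟨hk2β.le, by linarith⟩
          ⟨by linarith, by linarith⟩ ha0 hb0 hab
        simp only [smul_eq_mul] at hcomb
        have hpt : a * (2*β) + (x + y - 2*β)/(2*(y - β)) * (2*y) = x + y := by
          rw [ha, div_mul_eq_mul_div, div_mul_eq_mul_div, ← add_div,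
            show (y-x)*(2*β) + (x+y-2*β)*(2*y) = (x+y)*(2*(y-β)) by ring,
            mul_div_assoc, div_self hne2, mul_one]
        rw [hpt] at hcomb
        have hb1 : (x + y - 2*β)/(2*(y - β)) = 1 - a := by linarith
        rw [hb1, hg2β] at hcomb
        have ha12 : 1/2 ≤ a := by
          rw [ha, le_div_iff₀ (by linarith)]
          linarith
        nlinarith [mul_nonneg (by linarith : (0:ℝ) ≤ a - 1/2) (sub_nonneg.2 hC2y)]
    linarith
  intro x hx y hy
  by_cases hxβ : x < β <;> by_cases hyβ : y < β
  · rw [if_pos hxβ, if_pos hyβ]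
    have hA := LemA (x + y) ⟨by linarith [hx.1, hy.1], by linarith⟩
    have hrw : (φ β + φ' β * (2*x - β))/2 + (φ β + φ' β * (2*y - β))/2
        = g β + φ' β * (x + y) := by
      simp only [hg]; ring
    rw [hrw, hφg (x + y)]
    linarith
  · rw [if_pos hxβ, if_neg hyβ]
    exact mixed x y hx.1 hxβ (not_lt.1 hyβ) hy.2
  · rw [if_neg hxβ, if_pos hyβ]
    have := mixed y x hy.1 hyβ (not_lt.1 hxβ) hx.2
    rw [add_comm x y]
    linarith
  · rw [if_neg hxβ, if_neg hyβ]
    push_neg at hxβ hyβ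
    have hcomb : φ ((1/2 : ℝ) • (2*x) + (1/2 : ℝ) • (2*y))
        ≤ (1/2 : ℝ) • φ (2*x) + (1/2 : ℝ) • φ (2*y) :=
      cvxφ.2 ⟨by linarith, by linarith [hx.2]⟩
        ⟨by linarith, by linarith [hy.2]⟩ (by norm_num) (by norm_num) (by norm_num)
    simp only [smul_eq_mul] at hcomb
    rw [show 1/2 * (2*x) + 1/2 * (2*y) = x + y by ring] at hcomb
    linarith

theorem stmt11 (φ φ' φ'' : ℝ → ℝ)
    (hd1 : ∀ t ∈ Icc (0:ℝ) 2, HasDerivWithinAt φ (φ' t) (Icc 0 2) t)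
    (hd2 : ∀ t ∈ Icc (0:ℝ) 2, HasDerivWithinAt φ' (φ'' t) (Icc 0 2) t)
    (hc : ContinuousOn φ'' (Icc (0:ℝ) 2))
    (k : ℝ) (hk : k ∈ Ioo (0:ℝ) 2)
    (hconc : ∀ t ∈ Ico (0:ℝ) k, φ'' t < 0)
    (hconv : ∀ t ∈ Ioc k 2, 0 < φ'' t)
    (β : ℝ) (hβ : β ∈ Ioo (0:ℝ) 1)
    (hβeq : φ (2 * β) - φ β = β * φ' β)
    (Γ : ℝ → ℝ)
    (hΓ1 : ∀ x, 0 ≤ x → x < β → Γ x = β - x)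
    (hΓ2 : ∀ x, β ≤ x → x ≤ 1 → Γ x = x) :
    IsDoublyStochastic
      (Measure.map (fun x => (x, Γ x)) (volume.restrict (Icc (0:ℝ) 1))) ∧
    (∀ π : Measure (ℝ × ℝ), IsDoublyStochastic π →
      ∫ p, φ (p.1 + p.2) ∂π ≤
        ∫ p, φ (p.1 + p.2)
          ∂(Measure.map (fun x => (x, Γ x)) (volume.restrict (Icc (0:ℝ) 1)))) ∧
    ∫ p, φ (p.1 + p.2)
        ∂(Measure.map (fun x => (x, Γ x)) (volume.restrict (Icc (0:ℝ) 1))) =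
      ∫ x in (0:ℝ)..1, φ (x + Γ x) := by
  classical
  have hβ0 : 0 < β := hβ.1
  have hβ1 : β < 1 := hβ.2
  set μ01 := volume.restrict (Icc (0:ℝ) 1) with hμ01
  haveI : IsFiniteMeasure μ01 := by
    constructor
    rw [hμ01, Measure.restrict_apply_univ, Real.volume_Icc]
    exact ENNReal.ofReal_lt_top
  -- basic continuity
  have contφ : ContinuousOn φ (Icc 0 2) := fun t ht => (hd1 t ht).continuousWithinAt
  -- truncated versions
  obtain ⟨G, hGdef⟩ : ∃ G : ℝ → ℝ, G = fun x => if x < β then β - x else x := ⟨_, rfl⟩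
  obtain ⟨φt, hφtdef⟩ : ∃ φt : ℝ → ℝ, φt = fun t => φ (max 0 (min 2 t)) := ⟨_, rfl⟩
  obtain ⟨F, hFdef⟩ : ∃ F : ℝ → ℝ,
      F = fun x => if x < β then (φ β + φ' β * (2 * max 0 (min 1 x) - β))/2
        else φt (2 * x) / 2 := ⟨_, rfl⟩
  have hclamp2 : ∀ t : ℝ, max 0 (min 2 t) ∈ Icc (0:ℝ) 2 :=
    fun t => ⟨le_max_left _ _, max_le (by norm_num) (min_le_left _ _)⟩
  have hφtc : Continuous φt := by
    rw [hφtdef]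
    exact contφ.comp_continuous
      (continuous_const.max (continuous_const.min continuous_id)) hclamp2
  have hφt_eq : ∀ t ∈ Icc (0:ℝ) 2, φt t = φ t := by
    intro t ht
    rw [hφtdef]
    simp only
    rw [min_eq_right ht.2, max_eq_right ht.1]
  obtain ⟨C, hC⟩ := isCompact_Icc.exists_bound_of_continuousOn contφ
  have hC0 : 0 ≤ C := (norm_nonneg (φ 0)).trans (hC 0 ⟨le_rfl, by norm_num⟩)
  have hφtb : ∀ t, ‖φt t‖ ≤ C := by
    intro t
    rw [hφtdef]
    exact hC _ (hclamp2 t)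
  have hFmeas : Measurable F := by
    rw [hFdef]
    refine Measurable.ite measurableSet_Iio ?_ ?_
    · fun_prop
    · exact (hφtc.measurable.comp (measurable_id.const_mul 2)).div_const 2
  set B : ℝ := (|φ β| + |φ' β| * 3)/2 + C with hBdef
  have hFb : ∀ x, ‖F x‖ ≤ B := by
    intro x
    simp only [hFdef]
    by_cases h : x < β
    · rw [if_pos h]
      have hc0 : (0:ℝ) ≤ max 0 (min 1 x) := le_max_left _ _
      have hc1 : max 0 (min 1 x) ≤ 1 := max_le zero_le_one (min_le_left _ _)
      have h1 : |2 * max 0 (min 1 x) - β| ≤ 3 := abs_le.mpr ⟨by linarith, by linarith⟩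
      have h2 : |φ' β| * |2 * max 0 (min 1 x) - β| ≤ |φ' β| * 3 :=
        mul_le_mul_of_nonneg_left h1 (abs_nonneg _)
      have h3 := abs_add_le (φ β) (φ' β * (2 * max 0 (min 1 x) - β))
      rw [abs_mul] at h3
      rw [Real.norm_eq_abs, abs_div, abs_two]
      rw [hBdef]
      linarith
    · rw [if_neg h]
      have hb := hφtb (2 * x)
      rw [Real.norm_eq_abs] at hb
      rw [Real.norm_eq_abs, abs_div, abs_two, hBdef]
      have := abs_nonneg (φ β)
      have := abs_nonneg (φ' β)
      linarith
  -- G facts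
  have hGm : Measurable G := by
    rw [hGdef]
    exact Measurable.ite measurableSet_Iio (measurable_const.sub measurable_id) measurable_id
  have hGpm : Measurable fun x => (x, G x) := measurable_id.prodMk hGm
  have hGmem : ∀ x ∈ Icc (0:ℝ) 1, G x ∈ Icc (0:ℝ) 1 := by
    intro x hx
    rw [hGdef]
    simp only
    by_cases h : x < β
    · rw [if_pos h]
      exact ⟨by linarith [hx.1], by linarith [hx.1]⟩
    · rw [if_neg h]
      exact hx
  have heq : (fun x => (x, Γ x)) =ᵐ[μ01] (fun x => (x, G x)) := by
    rw [hμ01]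
    filter_upwards [ae_restrict_mem measurableSet_Icc] with x hx
    rcases lt_or_ge x β with h | h
    · rw [hGdef]
      simp only [if_pos h, hΓ1 x hx.1 h]
    · rw [hGdef]
      simp only [if_neg (not_lt.2 h), hΓ2 x h hx.2]
  have hmapeq : Measure.map (fun x => (x, Γ x)) μ01
      = Measure.map (fun x => (x, G x)) μ01 := Measure.map_congr heq
  -- the pushforward under G is doubly stochastic
  have hDSG : IsDoublyStochastic (Measure.map (fun x => (x, G x)) μ01) := by
    refine ⟨?_, ?_, ?_⟩
    · constructor
      rw [Measure.map_apply hGpm MeasurableSet.univ, preimage_univ, hμ01,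
        Measure.restrict_apply MeasurableSet.univ, univ_inter, Real.volume_Icc]
      norm_num
    · intro B' hB hBsub
      rw [Measure.map_apply hGpm (hB.prod measurableSet_Icc), hμ01,
        Measure.restrict_apply (hGpm (hB.prod measurableSet_Icc))]
      have hset : (fun x => (x, G x)) ⁻¹' (B' ×ˢ Icc (0:ℝ) 1) ∩ Icc (0:ℝ) 1 = B' := by
        ext x
        simp only [mem_inter_iff, mem_preimage, mem_prod]
        constructor
        · rintro ⟨⟨hxB, -⟩, -⟩; exact hxB
        · intro hxB; exact ⟨⟨hxB, hGmem x (hBsub hxB)⟩, hBsub hxB⟩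
      rw [hset]
    · intro B' hB hBsub
      rw [Measure.map_apply hGpm (measurableSet_Icc.prod hB), hμ01,
        Measure.restrict_apply (hGpm (measurableSet_Icc.prod hB))]
      have hset : (fun x => (x, G x)) ⁻¹' (Icc (0:ℝ) 1 ×ˢ B') ∩ Icc (0:ℝ) 1
          = ((fun x => β - x) ⁻¹' (B' ∩ Ioc 0 β)) ∪ (B' ∩ Icc β 1) := by
        ext x
        simp only [mem_inter_iff, mem_preimage, mem_prod, mem_union, mem_Ioc,
          mem_Icc, hGdef]
        constructor
        · rintro ⟨⟨⟨hx0, hx1⟩, hGB⟩, -⟩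
          by_cases hb : x < β
          · rw [if_pos hb] at hGB
            exact Or.inl ⟨hGB, by linarith, by linarith⟩
          · rw [if_neg hb] at hGB
            exact Or.inr ⟨hGB, not_lt.1 hb, hx1⟩
        · rintro (⟨hBm, hb0, hbb⟩ | ⟨hBm, hbx, hx1⟩)
          · have hx0 : 0 ≤ x := by linarith
            have hxb : x < β := by linarith
            refine ⟨⟨⟨hx0, by linarith⟩, ?_⟩, hx0, by linarith⟩
            rw [if_pos hxb]; exact hBm
          · refine ⟨⟨⟨by linarith, hx1⟩, ?_⟩, by linarith, hx1⟩
            rw [if_neg (not_lt.2 hbx)]; exact hBm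
      have hdisj : Disjoint ((fun x => β - x) ⁻¹' (B' ∩ Ioc 0 β)) (B' ∩ Icc β 1) := by
        rw [Set.disjoint_left]
        intro x hx1 hx2
        have h1 : 0 < β - x := hx1.2.1
        have h2 : β ≤ x := hx2.2.1
        linarith
      rw [hset, measure_union hdisj (hB.inter measurableSet_Icc),
        aux_refl β _ (hB.inter measurableSet_Ioc), aux_vol_split β B' hB hBsub]
  have hDS : IsDoublyStochastic (Measure.map (fun x => (x, Γ x)) μ01) := by
    rw [hmapeq]; exact hDSG
  -- key pointwise inequality restated via F
  have keyIneq := aux_analysis φ φ' φ'' hd1 hd2 k hk hconc hconv β hβ hβeq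
  have hFeq : ∀ x ∈ Icc (0:ℝ) 1,
      F x = (if x < β then (φ β + φ' β * (2*x - β))/2 else φ (2*x)/2) := by
    intro x hx
    simp only [hFdef]
    by_cases h : x < β
    · rw [if_pos h, if_pos h, min_eq_right hx.2, max_eq_right hx.1]
    · rw [if_neg h, if_neg h, hφt_eq _ ⟨by linarith [hx.1], by linarith [hx.2]⟩]
  have hkeyF : ∀ x ∈ Icc (0:ℝ) 1, ∀ y ∈ Icc (0:ℝ) 1, φ (x + y) ≤ F x + F y := by
    intro x hx y hy
    rw [hFeq x hx, hFeq y hy]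
    exact keyIneq x hx y hy
  -- integrability of F
  have hFint : Integrable F μ01 :=
    Integrable.mono' (integrable_const B) hFmeas.aestronglyMeasurable
      (ae_of_all _ hFb)
  have hFGint : Integrable (fun x => F (G x)) μ01 :=
    Integrable.mono' (integrable_const B) ((hFmeas.comp hGm)).aestronglyMeasurable
      (ae_of_all _ fun x => hFb _)
  -- general bound for doubly stochastic measures
  have hbound : ∀ π : Measure (ℝ × ℝ), IsDoublyStochastic π →
      ∫ p, φ (p.1 + p.2) ∂π ≤ (∫ x, F x ∂μ01) + ∫ x, F x ∂μ01 := by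
    intro π hπ
    haveI := hπ.1
    have hae := aux_mem_ae π hπ
    have hint1 : Integrable (fun p : ℝ × ℝ => φt (p.1 + p.2)) π :=
      Integrable.mono' (integrable_const C)
        ((hφtc.comp (continuous_fst.add continuous_snd)).aestronglyMeasurable)
        (ae_of_all _ fun p => hφtb _)
    have i1 : Integrable (fun p : ℝ × ℝ => F p.1) π :=
      Integrable.mono' (integrable_const B)
        ((hFmeas.comp measurable_fst).aestronglyMeasurable)
        (ae_of_all _ fun p => hFb _)
    have i2 : Integrable (fun p : ℝ × ℝ => F p.2) π :=
      Integrable.mono' (integrable_const B)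
        ((hFmeas.comp measurable_snd).aestronglyMeasurable)
        (ae_of_all _ fun p => hFb _)
    have e0 : ∫ p, φ (p.1 + p.2) ∂π = ∫ p, φt (p.1 + p.2) ∂π := by
      refine integral_congr_ae ?_
      filter_upwards [hae] with p hp
      obtain ⟨h1, h2⟩ := hp
      exact (hφt_eq _ ⟨by linarith [h1.1, h2.1], by linarith [h1.2, h2.2]⟩).symm
    have e1 : ∫ p, φt (p.1 + p.2) ∂π ≤ ∫ p, (F p.1 + F p.2) ∂π := by
      refine integral_mono_ae hint1 (i1.add i2) ?_
      filter_upwards [hae] with p hp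
      obtain ⟨h1, h2⟩ := hp
      rw [hφt_eq _ ⟨by linarith [h1.1, h2.1], by linarith [h1.2, h2.2]⟩]
      exact hkeyF p.1 h1 p.2 h2
    have f1 : ∫ p, F p.1 ∂π = ∫ x, F x ∂μ01 := by
      rw [hμ01, ← aux_fst π hπ]
      exact (integral_map measurable_fst.aemeasurable
        hFmeas.aestronglyMeasurable).symm
    have f2 : ∫ p, F p.2 ∂π = ∫ x, F x ∂μ01 := by
      rw [hμ01, ← aux_snd π hπ]
      exact (integral_map measurable_snd.aemeasurable
        hFmeas.aestronglyMeasurable).symm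
    have e2 : ∫ p, (F p.1 + F p.2) ∂π = (∫ x, F x ∂μ01) + ∫ x, F x ∂μ01 := by
      rw [integral_add i1 i2, f1, f2]
    rw [e0]
    exact e1.trans_eq e2
  -- the second marginal of the optimal coupling
  have hmapG : Measure.map G μ01 = μ01 := by
    have h1 : Measure.map Prod.snd (Measure.map (fun x => (x, G x)) μ01)
        = Measure.map G μ01 := by
      rw [Measure.map_map measurable_snd hGpm]
      rfl
    rw [← h1, aux_snd _ hDSG, hμ01]
  -- the value of the integral for the optimal coupling
  have hint_πs : ∫ p, φ (p.1 + p.2) ∂(Measure.map (fun x => (x, G x)) μ01)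
      = ∫ x, φt (x + G x) ∂μ01 := by
    have e0 : ∫ p, φ (p.1 + p.2) ∂(Measure.map (fun x => (x, G x)) μ01)
        = ∫ p, φt (p.1 + p.2) ∂(Measure.map (fun x => (x, G x)) μ01) := by
      refine integral_congr_ae ?_
      filter_upwards [aux_mem_ae _ hDSG] with p hp
      obtain ⟨h1, h2⟩ := hp
      exact (hφt_eq _ ⟨by linarith [h1.1, h2.1], by linarith [h1.2, h2.2]⟩).symm
    have hAESM : AEStronglyMeasurable (fun p : ℝ × ℝ => φt (p.1 + p.2))
        (Measure.map (fun x => (x, G x)) μ01) :=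
      (hφtc.comp (continuous_fst.add continuous_snd)).aestronglyMeasurable
    rw [e0, integral_map hGpm.aemeasurable hAESM]
  have hptwise : ∀ x ∈ Icc (0:ℝ) 1, φt (x + G x) = F x + F (G x) := by
    intro x hx
    by_cases h : x < β
    · have hGx : G x = β - x := by rw [hGdef]; simp only [if_pos h]
      rw [hGx, show x + (β - x) = β by ring,
        hφt_eq β ⟨hβ0.le, by linarith⟩]
      by_cases h2 : β - x < β
      · simp only [hFdef, if_pos h, if_pos h2]
        rw [min_eq_right hx.2, max_eq_right hx.1,
          min_eq_right (by linarith [hx.1] : β - x ≤ 1),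
          max_eq_right (by linarith : (0:ℝ) ≤ β - x)]
        ring
      · have hx0 : x = 0 := le_antisymm (by linarith [not_lt.1 h2]) hx.1
        subst hx0
        simp only [hFdef, if_pos h, if_neg h2]
        rw [show (2:ℝ) * (β - 0) = 2 * β by ring,
          hφt_eq (2 * β) ⟨by linarith, by linarith⟩,
          show ((0:ℝ) ⊔ ((1:ℝ) ⊓ (0:ℝ))) = 0 by norm_num]
        nlinarith [hβeq]
    · have hGx : G x = x := by rw [hGdef]; simp only [if_neg h]
      rw [hGx, show x + x = 2 * x by ring]
      simp only [hFdef, if_neg h]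
      ring
  have hsplit : ∫ x, φt (x + G x) ∂μ01 = (∫ x, F x ∂μ01) + ∫ x, F x ∂μ01 := by
    have e1 : ∫ x, φt (x + G x) ∂μ01 = ∫ x, (F x + F (G x)) ∂μ01 := by
      rw [hμ01]
      exact setIntegral_congr_fun measurableSet_Icc fun x hx => hptwise x hx
    have e2 : ∫ x, F (G x) ∂μ01 = ∫ x, F x ∂μ01 := by
      conv_rhs => rw [← hmapG]
      exact (integral_map hGm.aemeasurable hFmeas.aestronglyMeasurable).symm
    rw [e1, integral_add hFint hFGint, e2]
  refine ⟨hDS, fun π hπ => ?_, ?_⟩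
  · rw [hmapeq, hint_πs, hsplit]
    exact hbound π hπ
  · rw [hmapeq, hint_πs, intervalIntegral.integral_of_le zero_le_one, hμ01,
      MeasureTheory.integral_Icc_eq_integral_Ioc]
    refine setIntegral_congr_fun measurableSet_Ioc fun x hx => ?_
    rcases lt_or_ge x β with h | h
    · have hGx : G x = β - x := by rw [hGdef]; simp only [if_pos h]
      rw [hGx, hΓ1 x hx.1.le h, show x + (β - x) = β by ring,
        hφt_eq β ⟨hβ0.le, by linarith⟩]
    · have hGx : G x = x := by rw [hGdef]; simp only [if_neg (not_lt.2 h)]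
      rw [hGx, hΓ2 x h hx.2,
        hφt_eq (x + x) ⟨by linarith [hx.1.le], by linarith [hx.2]⟩]
end

section
/- Let φ : [0,2] → ℝ be twice continuously differentiable and let k ∈ (1,2) be such that φ''(t) < 0 for t ∈ [0,k) and φ''(t) > 0 for t ∈ (k,2], and suppose φ(2) − φ(1) ≤ φ'(1). Then for every doubly stochastic measure π on [0,1]², ∫ φ(x+y) dπ(x,y) ≤ φ(1); moreover the pushforward of Lebesgue measure on [0,1] under x ↦ (x, 1−x) is a doubly stochastic measure attaining this bound, since ∫₀¹ φ(x + (1−x)) dx = φ(1). -/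
open MeasureTheory Set

lemma tangent_le (φ φ' φ'' : ℝ → ℝ)
    (hd1 : ∀ t ∈ Icc (0:ℝ) 2, HasDerivWithinAt φ (φ' t) (Icc 0 2) t)
    (hd2 : ∀ t ∈ Icc (0:ℝ) 2, HasDerivWithinAt φ' (φ'' t) (Icc 0 2) t)
    (k : ℝ) (hk : k ∈ Ioo (1:ℝ) 2)
    (hconc : ∀ t ∈ Ico (0:ℝ) k, φ'' t < 0)
    (hconv : ∀ t ∈ Ioc k 2, 0 < φ'' t)
    (hβ : φ 2 - φ 1 ≤ φ' 1) :
    ∀ t ∈ Icc (0:ℝ) 2, φ t ≤ φ 1 + φ' 1 * (t - 1) := by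
  obtain ⟨hk1, hk2⟩ := hk
  have hφc : ContinuousOn φ (Icc 0 2) := fun x hx => (hd1 x hx).continuousWithinAt
  have hφ'c : ContinuousOn φ' (Icc 0 2) := fun x hx => (hd2 x hx).continuousWithinAt
  -- derivatives at interior points
  have hdAt : ∀ x ∈ Ioo (0:ℝ) 2, HasDerivAt φ (φ' x) x := by
    intro x hx
    exact (hd1 x (Ioo_subset_Icc_self hx)).hasDerivAt (Icc_mem_nhds hx.1 hx.2)
  have hd'At : ∀ x ∈ Ioo (0:ℝ) 2, HasDerivAt φ' (φ'' x) x := by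
    intro x hx
    exact (hd2 x (Ioo_subset_Icc_self hx)).hasDerivAt (Icc_mem_nhds hx.1 hx.2)
  -- φ' strictly decreasing on [0,k]
  have hanti : StrictAntiOn φ' (Icc 0 k) := by
    apply strictAntiOn_of_deriv_neg (convex_Icc _ _)
      (hφ'c.mono (Icc_subset_Icc le_rfl hk2.le))
    intro x hx
    rw [interior_Icc] at hx
    rw [(hd'At x ⟨hx.1, hx.2.trans hk2⟩).deriv]
    exact hconc x ⟨hx.1.le, hx.2⟩
  -- φ' strictly increasing on [k,2]
  have hmono : StrictMonoOn φ' (Icc k 2) := by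
    apply strictMonoOn_of_deriv_pos (convex_Icc _ _)
      (hφ'c.mono (Icc_subset_Icc (by linarith) le_rfl))
    intro x hx
    rw [interior_Icc] at hx
    rw [(hd'At x ⟨by linarith [hx.1], hx.2⟩).deriv]
    exact hconv x ⟨hx.1, hx.2.le⟩
  set g : ℝ → ℝ := fun t => φ t - (φ 1 + φ' 1 * (t - 1)) with hg
  have hgc : ContinuousOn g (Icc 0 2) := by
    apply hφc.sub
    exact (continuous_const.add (continuous_const.mul (continuous_id.sub continuous_const))).continuousOn
  have hgd : ∀ x ∈ Ioo (0:ℝ) 2, HasDerivAt g (φ' x - φ' 1) x := by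
    intro x hx
    have h := (hdAt x hx).sub (((hasDerivAt_id x).sub_const 1).const_mul (φ' 1) |>.const_add (φ 1)); rw [mul_one] at h; exact h
  have h1 : (1:ℝ) ∈ Icc (0:ℝ) k := ⟨by norm_num, hk1.le⟩
  have hg1 : g 1 = 0 := by simp [hg]
  suffices H : ∀ t ∈ Icc (0:ℝ) 2, g t ≤ 0 by
    intro t ht; have := H t ht; simp only [hg] at this; linarith
  -- on [0,1] g increasing
  have h01 : ∀ t ∈ Icc (0:ℝ) 1, g t ≤ 0 := by
    intro t ht
    rcases eq_or_lt_of_le ht.2 with h | h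
    · subst h; simp [hg1]
    have : StrictMonoOn g (Icc t 1) := by
      apply strictMonoOn_of_deriv_pos (convex_Icc _ _)
        (hgc.mono (Icc_subset_Icc ht.1 (by norm_num)))
      intro x hx
      rw [interior_Icc] at hx
      rw [(hgd x ⟨lt_of_le_of_lt ht.1 hx.1, by linarith [hx.2]⟩).deriv]
      have := hanti ⟨by linarith [ht.1, hx.1], by linarith [hx.2]⟩ h1 hx.2
      linarith
    have := this ⟨le_rfl, h.le⟩ ⟨h.le, le_rfl⟩ h
    linarith [hg1]
  -- on [1,k] g decreasing, g ≤ 0; get g k ≤ 0 and general on [1,k]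
  have h1k : ∀ t ∈ Icc (1:ℝ) k, g t ≤ 0 := by
    intro t ht
    rcases eq_or_lt_of_le ht.1 with h | h
    · rw [← h, hg1]
    have : StrictAntiOn g (Icc 1 t) := by
      apply strictAntiOn_of_deriv_neg (convex_Icc _ _)
        (hgc.mono (Icc_subset_Icc (by norm_num) (by linarith [ht.2])))
      intro x hx
      rw [interior_Icc] at hx
      rw [(hgd x ⟨by linarith [hx.1], by linarith [hx.2, ht.2]⟩).deriv]
      have := hanti h1 ⟨by linarith [hx.1], by linarith [hx.2, ht.2]⟩ hx.1
      linarith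
    have := this ⟨le_rfl, h.le⟩ ⟨h.le, le_rfl⟩ h
    linarith [hg1]
  have hgk : g k ≤ 0 := h1k k ⟨hk1.le, le_rfl⟩
  have hg2 : g 2 ≤ 0 := by simp only [hg]; linarith
  -- on [k,2]
  have hk2' : ∀ t ∈ Icc k 2, g t ≤ 0 := by
    intro t ht
    by_cases hcase : φ' t ≤ φ' 1
    · -- g decreasing on [k,t]
      rcases eq_or_lt_of_le ht.1 with h | h
      · rw [← h]; exact hgk
      have : StrictAntiOn g (Icc k t) := by
        apply strictAntiOn_of_deriv_neg (convex_Icc _ _)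
          (hgc.mono (Icc_subset_Icc (by linarith) ht.2))
        intro x hx
        rw [interior_Icc] at hx
        rw [(hgd x ⟨by linarith [hx.1], by linarith [hx.2, ht.2]⟩).deriv]
        have := hmono ⟨le_rfl, by linarith⟩ ⟨hx.1.le, by linarith [hx.2, ht.2]⟩ hx.1
        have hk1' : φ' k < φ' 1 := hanti h1 ⟨by linarith, le_rfl⟩ hk1
        have := hmono ⟨hx.1.le, by linarith [hx.2, ht.2]⟩ ⟨by linarith, ht.2⟩ hx.2
        linarith
      have := this ⟨le_rfl, h.le⟩ ⟨h.le, le_rfl⟩ h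
      linarith
    · -- φ' t > φ' 1 : g increasing on [t,2]
      push_neg at hcase
      rcases eq_or_lt_of_le ht.2 with h | h
      · rw [h]; exact hg2
      have : StrictMonoOn g (Icc t 2) := by
        apply strictMonoOn_of_deriv_pos (convex_Icc _ _)
          (hgc.mono (Icc_subset_Icc (by linarith [ht.1]) le_rfl))
        intro x hx
        rw [interior_Icc] at hx
        rw [(hgd x ⟨by linarith [hx.1, ht.1], hx.2⟩).deriv]
        have := hmono ⟨ht.1, ht.2⟩ ⟨by linarith [hx.1, ht.1], hx.2.le⟩ hx.1
        linarith
      have := this ⟨le_rfl, h.le⟩ ⟨h.le, le_rfl⟩ h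
      linarith
  intro t ht
  rcases le_total t 1 with h | h
  · exact h01 t ⟨ht.1, h⟩
  rcases le_total t k with h' | h'
  · exact h1k t ⟨h, h'⟩
  · exact hk2' t ⟨h', ht.2⟩


lemma antidiag_ds :
    IsDoublyStochastic
      (Measure.map (fun x => (x, 1 - x)) (volume.restrict (Icc (0:ℝ) 1))) := by
  have hf : Measurable (fun x : ℝ => (x, 1 - x)) :=
    measurable_id.prodMk (measurable_const.sub measurable_id)
  refine ⟨⟨?_⟩, ?_, ?_⟩
  · rw [Measure.map_apply hf MeasurableSet.univ]
    simp [Real.volume_Icc]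
  · intro B hB hBsub
    rw [Measure.map_apply hf (hB.prod measurableSet_Icc),
      Measure.restrict_apply (hf (hB.prod measurableSet_Icc))]
    have : (fun x : ℝ => (x, 1 - x)) ⁻¹' (B ×ˢ Icc 0 1) ∩ Icc 0 1 = B := by
      ext x
      simp only [mem_inter_iff, mem_preimage, mem_prod, mem_Icc]
      constructor
      · rintro ⟨⟨hx, _⟩, _⟩; exact hx
      · intro hx
        have := hBsub hx
        rw [mem_Icc] at this
        exact ⟨⟨hx, by constructor <;> linarith [this.1, this.2]⟩, this⟩
    rw [this]
  · intro B hB hBsub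
    rw [Measure.map_apply hf (measurableSet_Icc.prod hB),
      Measure.restrict_apply (hf (measurableSet_Icc.prod hB))]
    have he : (fun x : ℝ => (x, 1 - x)) ⁻¹' (Icc 0 1 ×ˢ B) ∩ Icc 0 1
        = (fun x : ℝ => 1 - x) ⁻¹' B := by
      ext x
      simp only [mem_inter_iff, mem_preimage, mem_prod, mem_Icc]
      constructor
      · rintro ⟨⟨_, hx⟩, _⟩; exact hx
      · intro hx
        have := hBsub hx
        rw [mem_Icc] at this
        exact ⟨⟨by constructor <;> linarith [this.1, this.2], hx⟩,
          by constructor <;> linarith [this.1, this.2]⟩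
    rw [he]
    have hmp : MeasurePreserving (fun x : ℝ => 1 - x) volume volume := by
      have : (fun x : ℝ => 1 - x) = (fun x : ℝ => 1 + x) ∘ (fun x : ℝ => -x) := by
        ext x; simp [sub_eq_add_neg]
      rw [this]
      exact (measurePreserving_add_left volume 1).comp (Measure.measurePreserving_neg volume)
    exact hmp.measure_preimage hB.nullMeasurableSet

lemma lastpart (φ : ℝ → ℝ) : ∫ x in (0:ℝ)..1, φ (x + (1 - x)) = φ 1 := by
  have : ∀ x : ℝ, x + (1 - x) = 1 := fun x => by ring
  simp [this]


lemma main_ineq (φ φ' : ℝ → ℝ)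
    (hφc : ContinuousOn φ (Icc 0 2))
    (htan : ∀ t ∈ Icc (0:ℝ) 2, φ t ≤ φ 1 + φ' 1 * (t - 1))
    (π : Measure (ℝ × ℝ)) (hπ : IsDoublyStochastic π) :
    ∫ p, φ (p.1 + p.2) ∂π ≤ φ 1 := by
  obtain ⟨hprob, hm1, hm2⟩ := hπ
  set S : Set (ℝ × ℝ) := Icc (0:ℝ) 1 ×ˢ Icc (0:ℝ) 1 with hSdef
  have hS : MeasurableSet S := measurableSet_Icc.prod measurableSet_Icc
  have hS1 : π S = 1 := by
    rw [hm1 (Icc 0 1) measurableSet_Icc (subset_refl _)]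
    simp [Real.volume_Icc]
  have hSc : π Sᶜ = 0 := by
    rw [measure_compl hS (measure_ne_top π S), hS1, measure_univ, tsub_self]
  have haeS : ∀ᵐ p ∂π, p ∈ S := by
    rw [ae_iff]
    convert hSc using 2
    rfl
  -- marginals as maps
  have hmapfst : π.map Prod.fst = volume.restrict (Icc (0:ℝ) 1) := by
    ext s hs
    rw [Measure.map_apply measurable_fst hs, Measure.restrict_apply hs]
    have hdiff : π (Prod.fst ⁻¹' s \ S) = 0 :=
      measure_mono_null (diff_subset_compl _ _) hSc
    rw [← measure_inter_add_diff (Prod.fst ⁻¹' s) hS, hdiff, add_zero]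
    have : Prod.fst ⁻¹' s ∩ S = (s ∩ Icc 0 1) ×ˢ Icc (0:ℝ) 1 := by
      ext p
      simp only [hSdef, mem_inter_iff, mem_preimage, mem_prod]
      tauto
    rw [this, hm1 _ (hs.inter measurableSet_Icc) inter_subset_right]
  have hmapsnd : π.map Prod.snd = volume.restrict (Icc (0:ℝ) 1) := by
    ext s hs
    rw [Measure.map_apply measurable_snd hs, Measure.restrict_apply hs]
    have hdiff : π (Prod.snd ⁻¹' s \ S) = 0 :=
      measure_mono_null (diff_subset_compl _ _) hSc
    rw [← measure_inter_add_diff (Prod.snd ⁻¹' s) hS, hdiff, add_zero]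
    have : Prod.snd ⁻¹' s ∩ S = Icc (0:ℝ) 1 ×ˢ (s ∩ Icc 0 1) := by
      ext p
      simp only [hSdef, mem_inter_iff, mem_preimage, mem_prod]
      tauto
    rw [this, hm2 _ (hs.inter measurableSet_Icc) inter_subset_right]
  have half : ∫ x in Icc (0:ℝ) 1, x = 1 / 2 := by
    rw [integral_Icc_eq_integral_Ioc, ← intervalIntegral.integral_of_le zero_le_one]
    rw [integral_id]
    norm_num
  have hIfst : ∫ p, p.1 ∂π = 1 / 2 := by
    have := integral_map (μ := π) (φ := Prod.fst) measurable_fst.aemeasurable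
      (f := fun x : ℝ => x) aestronglyMeasurable_id
    rw [hmapfst] at this
    rw [← this, half]
  have hIsnd : ∫ p, p.2 ∂π = 1 / 2 := by
    have := integral_map (μ := π) (φ := Prod.snd) measurable_snd.aemeasurable
      (f := fun x : ℝ => x) aestronglyMeasurable_id
    rw [hmapsnd] at this
    rw [← this, half]
  -- truncation
  set proj : ℝ → ℝ := fun t => max 0 (min t 2) with hproj
  have hprojc : Continuous proj := continuous_const.max (continuous_id.min continuous_const)
  have hprojmem : ∀ t, proj t ∈ Icc (0:ℝ) 2 :=
    fun t => ⟨le_max_left _ _, max_le (by norm_num) (min_le_right _ _)⟩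
  have hprojid : ∀ t ∈ Icc (0:ℝ) 2, proj t = t := by
    intro t ht
    simp [hproj, min_eq_left ht.2, max_eq_right ht.1]
  set F : ℝ × ℝ → ℝ := fun p => φ (proj (p.1 + p.2)) with hF
  have hFc : Continuous F :=
    hφc.comp_continuous (hprojc.comp (continuous_fst.add continuous_snd)) (fun p => hprojmem _)
  obtain ⟨C, hC⟩ := (isCompact_Icc (α := ℝ)).exists_bound_of_continuousOn hφc
  have hFint : Integrable F π := by
    refine (integrable_const C).mono' hFc.aestronglyMeasurable (ae_of_all _ fun p => ?_)
    exact hC _ (hprojmem _)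
  have hmem : ∀ p : ℝ × ℝ, p ∈ S → p.1 + p.2 ∈ Icc (0:ℝ) 2 := by
    rintro ⟨x, y⟩ ⟨hx, hy⟩
    simp only [mem_Icc] at *
    constructor <;> linarith [hx.1, hx.2, hy.1, hy.2]
  have hcong : ∫ p, φ (p.1 + p.2) ∂π = ∫ p, F p ∂π := by
    refine integral_congr_ae (haeS.mono fun p hp => ?_)
    rw [hF]; simp only
    rw [hprojid _ (hmem p hp)]
  have h1int : Integrable (fun p : ℝ × ℝ => p.1) π := by
    refine (integrable_const (1:ℝ)).mono' measurable_fst.aestronglyMeasurable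
      (haeS.mono fun p hp => ?_)
    have := (hp : p ∈ S).1
    rw [mem_Icc] at this
    rw [Real.norm_eq_abs, abs_le]; constructor <;> linarith [this.1, this.2]
  have h2int : Integrable (fun p : ℝ × ℝ => p.2) π := by
    refine (integrable_const (1:ℝ)).mono' measurable_snd.aestronglyMeasurable
      (haeS.mono fun p hp => ?_)
    have := (hp : p ∈ S).2
    rw [mem_Icc] at this
    rw [Real.norm_eq_abs, abs_le]; constructor <;> linarith [this.1, this.2]
  set L : ℝ × ℝ → ℝ := fun p => φ 1 + φ' 1 * (p.1 + p.2 - 1) with hL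
  have hLint : Integrable L π := by
    have : Integrable (fun p : ℝ × ℝ => p.1 + p.2 - 1) π :=
      (h1int.add h2int).sub (integrable_const 1)
    exact (integrable_const (φ 1)).add (this.const_mul (φ' 1))
  have hle : ∫ p, F p ∂π ≤ ∫ p, L p ∂π := by
    refine integral_mono_ae hFint hLint (haeS.mono fun p hp => ?_)
    rw [hF, hL]; simp only
    rw [hprojid _ (hmem p hp)]
    exact htan _ (hmem p hp)
  have hLval : ∫ p, L p ∂π = φ 1 := by
    rw [hL]
    have : Integrable (fun p : ℝ × ℝ => φ' 1 * (p.1 + p.2 - 1)) π :=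
      ((h1int.add h2int).sub (integrable_const 1)).const_mul (φ' 1)
    have h12 : Integrable (fun p : ℝ × ℝ => p.1 + p.2) π := h1int.add h2int
    rw [integral_add (integrable_const _) this, integral_const, probReal_univ,
      integral_const_mul, integral_sub h12 (integrable_const 1),
      integral_add h1int h2int, integral_const, probReal_univ, hIfst, hIsnd]
    norm_num
  rw [hcong]
  calc ∫ p, F p ∂π ≤ ∫ p, L p ∂π := hle
    _ = φ 1 := hLval

theorem stmt17 (φ φ' φ'' : ℝ → ℝ)
    (hd1 : ∀ t ∈ Icc (0:ℝ) 2, HasDerivWithinAt φ (φ' t) (Icc 0 2) t)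
    (hd2 : ∀ t ∈ Icc (0:ℝ) 2, HasDerivWithinAt φ' (φ'' t) (Icc 0 2) t)
    (hc : ContinuousOn φ'' (Icc (0:ℝ) 2))
    (k : ℝ) (hk : k ∈ Ioo (1:ℝ) 2)
    (hconc : ∀ t ∈ Ico (0:ℝ) k, φ'' t < 0)
    (hconv : ∀ t ∈ Ioc k 2, 0 < φ'' t)
    (hβ : φ 2 - φ 1 ≤ φ' 1) :
    (∀ π : Measure (ℝ × ℝ), IsDoublyStochastic π →
      ∫ p, φ (p.1 + p.2) ∂π ≤ φ 1) ∧
    IsDoublyStochastic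
      (Measure.map (fun x => (x, 1 - x)) (volume.restrict (Icc (0:ℝ) 1))) ∧
    ∫ x in (0:ℝ)..1, φ (x + (1 - x)) = φ 1 := by
  have hφc : ContinuousOn φ (Icc 0 2) := fun x hx => (hd1 x hx).continuousWithinAt
  exact ⟨fun π hπ => main_ineq φ φ' hφc
      (tangent_le φ φ' φ'' hd1 hd2 k hk hconc hconv hβ) π hπ,
    antidiag_ds, lastpart φ⟩
end
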